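/- Let ℓ be an odd prime, k a positive integer with (ℓ-1) ∤ k, and k' ≡ k (mod (ℓ-1)ℓ^{n-1}) with (ℓ-1) ∤ k'. Then the ℓ-parts of (1-ℓ^{k-1})B_k/k and (1-ℓ^{k'-1})B_{k'}/k' are congruent modulo ℓ^n; equivalently, v_ℓ of the numerator of B_k/k and of B_{k'}/k' agree up to ℓ^n in the sense that the ℓ-power parts of the numerators are congruent mod ℓ^n. -/

import Mathlib

open Finset

namespace Stmt12

variable {p : ℕ} [hp : Fact p.Prime]

/-- Ultrametric bound for finite sums in `ℚ_[p]`. -/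
lemma norm_sum_le_of_le {ι : Type*} (s : Finset ι) (f : ι → ℚ_[p]) {C : ℝ} (hC : 0 ≤ C)
    (h : ∀ i ∈ s, ‖f i‖ ≤ C) : ‖∑ i ∈ s, f i‖ ≤ C := by
  classical
  induction s using Finset.induction with
  | empty => simpa using hC
  | @insert x s hx ih =>
    rw [Finset.sum_insert hx]
    refine le_trans (Padic.nonarchimedean _ _) (max_le (h x (mem_insert_self _ _)) ?_)
    exact ih fun i hi => h i (mem_insert_of_mem hi)

lemma norm_intCast_le_pow_of_dvd (z : ℤ) (n : ℕ) (h : (p : ℤ) ^ n ∣ z) :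
    ‖(z : ℚ_[p])‖ ≤ ((p : ℝ)⁻¹) ^ n := by
  obtain ⟨e, rfl⟩ := h
  push_cast
  rw [norm_mul, norm_pow, Padic.norm_p]
  calc ((p:ℝ)⁻¹) ^ n * ‖(e : ℚ_[p])‖ ≤ ((p:ℝ)⁻¹)^n * 1 := by
        have := Padic.norm_int_le_one (p := p) e
        have h0 : (0:ℝ) ≤ ((p:ℝ)⁻¹)^n := by positivity
        nlinarith [norm_nonneg ((e : ℚ_[p]))]
    _ = _ := mul_one _

lemma norm_natCast_le_one (a : ℕ) : ‖(a : ℚ_[p])‖ ≤ 1 := by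
  exact_mod_cast Padic.norm_int_le_one (a : ℤ)

/-- Fermat–Euler termwise congruence. -/
lemma pow_sub_pow_dvd {a : ℕ} (ha : ¬ p ∣ a) {k k' n : ℕ} (hn : 1 ≤ n)
    (h : k ≡ k' [MOD (p - 1) * p ^ (n - 1)]) :
    (p : ℤ) ^ n ∣ (a : ℤ) ^ k - (a : ℤ) ^ k' := by
  have hcop : a.Coprime (p ^ n) :=
    Nat.Coprime.pow_right n ((hp.out.coprime_iff_not_dvd.mpr ha).symm)
  have hcast : ((p:ℤ)^n) = ((p^n : ℕ) : ℤ) := by push_cast; ring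
  rw [hcast, ← ZMod.intCast_zmod_eq_zero_iff_dvd]
  push_cast
  rw [sub_eq_zero]
  haveI : NeZero (p ^ n) := ⟨pow_ne_zero _ hp.out.ne_zero⟩
  set w := ZMod.unitOfCoprime a hcop with hw
  have hcoe : ((w : ZMod (p^n)) : ZMod (p^n)) = (a : ZMod (p^n)) := ZMod.coe_unitOfCoprime a hcop
  have hord : orderOf w ∣ (p - 1) * p ^ (n - 1) := by
    have h1 : w ^ (Nat.totient (p ^ n)) = 1 := ZMod.pow_totient w
    have h2 : Nat.totient (p ^ n) = p ^ (n - 1) * (p - 1) := Nat.totient_prime_pow hp.out hn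
    refine dvd_trans (orderOf_dvd_of_pow_eq_one h1) ?_
    rw [h2, mul_comm]
  have hmod : k ≡ k' [MOD orderOf w] := Nat.ModEq.of_dvd hord h
  have : w ^ k = w ^ k' := pow_eq_pow_iff_modEq.mpr hmod
  have := congrArg (Units.val) this
  simpa [hcoe] using this

/-- The distinguished unit given by `c`. -/
noncomputable def cu (c : ℕ) (hc : c.Coprime p) (N : ℕ) : (ZMod (p ^ N))ˣ :=
  ZMod.unitOfCoprime c (hc.pow_right N)

/-- value of a unit mod p^N as a natural number -/
def av (N : ℕ) (u : (ZMod (p ^ N))ˣ) : ℕ := (u : ZMod (p ^ N)).val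

/-- The `c`-twist discrepancy. -/
noncomputable def dd (c : ℕ) (hc : c.Coprime p) (N : ℕ) (u : (ZMod (p ^ N))ˣ) : ℤ :=
  (c : ℤ) * av N ((cu c hc N)⁻¹ * u) - av N u

lemma dd_dvd (c : ℕ) (hc : c.Coprime p) (N : ℕ) (u : (ZMod (p ^ N))ˣ) :
    ((p : ℤ)) ^ N ∣ dd c hc N u := by
  haveI : NeZero (p ^ N) := ⟨pow_ne_zero _ hp.out.ne_zero⟩
  have hcast : ((p:ℤ)^N) = ((p^N : ℕ) : ℤ) := by push_cast; ring
  rw [hcast, ← ZMod.intCast_zmod_eq_zero_iff_dvd]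
  unfold dd av
  push_cast
  rw [ZMod.natCast_val, ZMod.natCast_val, ZMod.cast_id, ZMod.cast_id]
  have hc' : (c : ZMod (p ^ N)) = ((cu c hc N : (ZMod (p^N))ˣ) : ZMod (p^N)) :=
    (ZMod.coe_unitOfCoprime c (hc.pow_right N)).symm
  rw [hc']
  have h1 : ((cu c hc N : (ZMod (p^N))ˣ) : ZMod (p^N)) * (((cu c hc N)⁻¹ : (ZMod (p^N))ˣ) : ZMod (p^N)) = 1 := by
    rw [← Units.val_mul, mul_inv_cancel, Units.val_one]
  rw [← mul_assoc, h1, one_mul, sub_self]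

/-- Riemann sum `Φ`. -/
noncomputable def Phi (c : ℕ) (hc : c.Coprime p) (N k : ℕ) : ℚ_[p] :=
  ∑ u : (ZMod (p ^ N))ˣ, (av N u : ℚ_[p]) ^ (k - 1) * (dd c hc N u : ℚ_[p]) / (p : ℚ_[p]) ^ N

/-- power sum over units -/
noncomputable def T (N k : ℕ) : ℚ_[p] := ∑ u : (ZMod (p ^ N))ˣ, (av N u : ℚ_[p]) ^ k


lemma reindex (c : ℕ) (hc : c.Coprime p) (N : ℕ) (F : ℕ → ℚ_[p]) :
    ∑ u : (ZMod (p ^ N))ˣ, F (av N ((cu c hc N)⁻¹ * u)) = ∑ u : (ZMod (p ^ N))ˣ, F (av N u) := by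
  exact Fintype.sum_equiv (Equiv.mulLeft (cu c hc N)⁻¹) _ _ (fun u => rfl)

/-- Key identity: `(1 - c^k) * T = -(k * p^N * Φ) - R`. -/
lemma key_identity (c : ℕ) (hc : c.Coprime p) (N k : ℕ) (hk : 2 ≤ k) :
    (1 - (c : ℚ_[p]) ^ k) * T N k
      = -((k : ℚ_[p]) * (p : ℚ_[p]) ^ N * Phi c hc N k)
        - ∑ u : (ZMod (p ^ N))ˣ, ∑ j ∈ range (k - 1),
            (av N u : ℚ_[p]) ^ j * (dd c hc N u : ℚ_[p]) ^ (k - j) * ((k.choose j : ℕ) : ℚ_[p]) := by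
  obtain ⟨k₀, rfl⟩ : ∃ k₀, k = k₀ + 2 := ⟨k - 2, by omega⟩
  have hpN : ((p : ℚ_[p]) ^ N) ≠ 0 := by
    apply pow_ne_zero
    exact_mod_cast (Nat.cast_ne_zero (R := ℚ_[p])).mpr hp.out.ne_zero
  have hstep : (c : ℚ_[p]) ^ (k₀ + 2) * T N (k₀ + 2)
      = ∑ u : (ZMod (p ^ N))ˣ, ((av N u : ℚ_[p]) + (dd c hc N u : ℚ_[p])) ^ (k₀ + 2) := by
    have h1 : (c : ℚ_[p]) ^ (k₀+2) * T N (k₀+2)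
        = ∑ u : (ZMod (p ^ N))ˣ, ((c : ℚ_[p]) * (av N ((cu c hc N)⁻¹ * u) : ℚ_[p])) ^ (k₀+2) := by
      rw [T, ← reindex c hc N (fun a => (a : ℚ_[p]) ^ (k₀+2)), Finset.mul_sum]
      congr 1; funext u; rw [mul_pow]
    rw [h1]
    congr 1; funext u
    congr 1
    have : (dd c hc N u : ℚ_[p]) = (c : ℚ_[p]) * (av N ((cu c hc N)⁻¹ * u) : ℚ_[p]) - (av N u : ℚ_[p]) := by
      unfold dd; push_cast; ring
    rw [this]; ring
  have hexp : ∀ u : (ZMod (p ^ N))ˣ,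
      ((av N u : ℚ_[p]) + (dd c hc N u : ℚ_[p])) ^ (k₀ + 2)
        = (av N u : ℚ_[p]) ^ (k₀ + 2)
          + ((k₀ + 2 : ℕ) : ℚ_[p]) * ((av N u : ℚ_[p]) ^ (k₀ + 1) * (dd c hc N u : ℚ_[p]))
          + ∑ j ∈ range (k₀ + 1),
              (av N u : ℚ_[p]) ^ j * (dd c hc N u : ℚ_[p]) ^ (k₀ + 2 - j) * ((k₀+2).choose j : ℚ_[p]) := by
    intro u
    rw [add_pow]
    rw [Finset.sum_range_succ, Finset.sum_range_succ]
    have h2 : (k₀ + 2) - (k₀ + 1) = 1 := by omega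
    have h3 : (k₀ + 2) - (k₀ + 2) = 0 := by omega
    rw [h2, h3]
    simp [Nat.choose_succ_self_right]
    ring
  have hPhi : (p : ℚ_[p]) ^ N * Phi c hc N (k₀ + 2)
      = ∑ u : (ZMod (p ^ N))ˣ, (av N u : ℚ_[p]) ^ (k₀ + 1) * (dd c hc N u : ℚ_[p]) := by
    rw [Phi, Finset.mul_sum]
    congr 1; funext u
    have : (k₀ + 2) - 1 = k₀ + 1 := by omega
    rw [this]
    field_simp
  have hsum : (c : ℚ_[p]) ^ (k₀+2) * T N (k₀+2)
      = T N (k₀+2) + ((k₀+2 : ℕ) : ℚ_[p]) * ((p : ℚ_[p]) ^ N * Phi c hc N (k₀+2))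
        + ∑ u : (ZMod (p ^ N))ˣ, ∑ j ∈ range (k₀ + 1),
            (av N u : ℚ_[p]) ^ j * (dd c hc N u : ℚ_[p]) ^ (k₀ + 2 - j) * ((k₀+2).choose j : ℚ_[p]) := by
    rw [hstep, Finset.sum_congr rfl (fun u _ => hexp u), Finset.sum_add_distrib,
      Finset.sum_add_distrib, ← Finset.mul_sum, ← hPhi, T]
  have h4 : k₀ + 2 - 1 = k₀ + 1 := by omega
  rw [h4]
  push_cast at hsum ⊢
  linear_combination -hsum


lemma T_eq (N k : ℕ) (hN : 1 ≤ N) :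
    (T N k : ℚ_[p]) = (∑ x ∈ range (p ^ N), (x : ℚ_[p]) ^ k)
      - (p : ℚ_[p]) ^ k * ∑ x ∈ range (p ^ (N - 1)), (x : ℚ_[p]) ^ k := by
  classical
  obtain ⟨N₀, rfl⟩ : ∃ N₀, N = N₀ + 1 := ⟨N - 1, by omega⟩
  haveI : NeZero (p ^ (N₀ + 1)) := ⟨pow_ne_zero _ hp.out.ne_zero⟩
  have hppos : 0 < p := hp.out.pos
  have h1 : (T (N₀+1) k : ℚ_[p])
      = ∑ a ∈ (range (p ^ (N₀+1))).filter (fun a => ¬ p ∣ a), (a : ℚ_[p]) ^ k := by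
    rw [T]
    refine Finset.sum_nbij' (i := fun u => av (N₀+1) u)
      (j := fun a => if h : a.Coprime (p ^ (N₀+1)) then ZMod.unitOfCoprime a h else 1)
      ?_ ?_ ?_ ?_ ?_
    · intro u _
      rw [mem_filter, mem_range]
      constructor
      · exact ZMod.val_lt _
      · intro hdvd
        have hcop : (av (N₀+1) u).Coprime (p ^ (N₀+1)) := ZMod.val_coe_unit_coprime u
        have : p ∣ Nat.gcd (av (N₀+1) u) (p ^ (N₀+1)) :=
          Nat.dvd_gcd hdvd (dvd_pow_self p (Nat.succ_ne_zero N₀))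
        rw [hcop] at this
        exact absurd (Nat.dvd_one.mp this) hp.out.ne_one
    · intro a _; exact mem_univ _
    · intro u _
      have hcop : (av (N₀+1) u).Coprime (p ^ (N₀+1)) := ZMod.val_coe_unit_coprime u
      simp only [dif_pos hcop]
      apply Units.ext
      rw [ZMod.coe_unitOfCoprime]
      unfold av
      rw [ZMod.natCast_val, ZMod.cast_id]
    · intro a ha
      rw [mem_filter, mem_range] at ha
      have hcop : a.Coprime (p ^ (N₀+1)) :=
        Nat.Coprime.pow_right _ ((hp.out.coprime_iff_not_dvd.mpr ha.2).symm)
      simp only [dif_pos hcop]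
      unfold av
      rw [ZMod.coe_unitOfCoprime]
      exact ZMod.val_cast_of_lt ha.1
    · intro u _; rfl
  have h2 : (∑ a ∈ (range (p ^ (N₀+1))).filter (fun a => p ∣ a), (a : ℚ_[p]) ^ k)
      = (p : ℚ_[p]) ^ k * ∑ x ∈ range (p ^ N₀), (x : ℚ_[p]) ^ k := by
    rw [Finset.mul_sum]
    refine Finset.sum_nbij' (i := fun a => a / p) (j := fun b => p * b) ?_ ?_ ?_ ?_ ?_
    · intro a ha
      rw [mem_filter, mem_range] at ha
      rw [mem_range]
      have : p * (a / p) < p * p ^ N₀ := by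
        rw [Nat.mul_div_cancel' ha.2]
        calc a < p ^ (N₀+1) := ha.1
          _ = p * p ^ N₀ := by ring
      exact lt_of_mul_lt_mul_left this (Nat.zero_le p)
    · intro b hb
      rw [mem_range] at hb
      rw [mem_filter, mem_range]
      refine ⟨?_, Dvd.intro b rfl⟩
      calc p * b < p * p ^ N₀ := by exact (Nat.mul_lt_mul_left hppos).mpr hb
        _ = p ^ (N₀ + 1) := by ring
    · intro a ha
      rw [mem_filter] at ha
      exact Nat.mul_div_cancel' ha.2
    · intro b _
      exact Nat.mul_div_cancel_left b hppos
    · intro a ha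
      rw [mem_filter] at ha
      conv_lhs => rw [← Nat.mul_div_cancel' ha.2]
      push_cast
      rw [mul_pow]
  rw [show (N₀ + 1 - 1) = N₀ from rfl, ← h2, h1, eq_sub_iff_add_eq, add_comm,
    Finset.sum_filter_add_sum_filter_not]


lemma S_cast (M k : ℕ) : (∑ x ∈ range M, (x : ℚ_[p]) ^ k)
    = ∑ i ∈ range (k + 1),
        ((bernoulli i * ((k + 1).choose i) / (k + 1) : ℚ) : ℚ_[p]) * (M : ℚ_[p]) ^ (k + 1 - i) := by
  have h := congrArg (fun q : ℚ => (q : ℚ_[p])) (sum_range_pow M k)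
  push_cast at h
  convert h using 2 with i hi
  push_cast
  ring

lemma norm_p_pow_le (e d : ℕ) (hd : d ≤ e) : ‖(p : ℚ_[p]) ^ e‖ ≤ ((p : ℝ)⁻¹) ^ d := by
  rw [norm_pow, Padic.norm_p]
  apply pow_le_pow_of_le_one (by positivity) _ hd
  rw [inv_le_one_iff₀]
  right
  exact_mod_cast hp.out.one_le

lemma T_approx (k : ℕ) (hk : 2 ≤ k) : ∃ C : ℝ, 0 ≤ C ∧ ∀ N, 1 ≤ N →
    ‖(T N k : ℚ_[p]) - (p : ℚ_[p]) ^ N * (1 - (p : ℚ_[p]) ^ (k - 1)) * ((bernoulli k : ℚ) : ℚ_[p])‖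
      ≤ C * ((p : ℝ)⁻¹) ^ (2 * N - 2) := by
  classical
  refine ⟨∑ i ∈ range (k + 1), ‖((bernoulli i * ((k + 1).choose i) / (k + 1) : ℚ) : ℚ_[p])‖,
    Finset.sum_nonneg fun i _ => norm_nonneg _, ?_⟩
  intro N hN
  obtain ⟨N₀, rfl⟩ : ∃ N₀, N = N₀ + 1 := ⟨N - 1, by omega⟩
  obtain ⟨k₀, rfl⟩ : ∃ k₀, k = k₀ + 2 := ⟨k - 2, by omega⟩
  set k := k₀ + 2
  set ci : ℕ → ℚ_[p] := fun i => ((bernoulli i * ((k + 1).choose i) / (k + 1) : ℚ) : ℚ_[p]) with hci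
  have hTT : (T (N₀+1) k : ℚ_[p])
      = ∑ i ∈ range (k + 1), ci i * ((p:ℚ_[p]) ^ ((N₀+1) * (k + 1 - i)) - (p:ℚ_[p]) ^ (k + N₀ * (k + 1 - i))) := by
    rw [T_eq (N₀+1) k (by omega), S_cast, S_cast]
    rw [Finset.mul_sum, ← Finset.sum_sub_distrib]
    congr 1; funext i
    have h1 : ((p ^ (N₀+1) : ℕ) : ℚ_[p]) = (p : ℚ_[p]) ^ (N₀+1) := by push_cast; ring
    have h2 : ((p ^ (N₀+1-1) : ℕ) : ℚ_[p]) = (p : ℚ_[p]) ^ N₀ := by push_cast; ring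
    rw [h1, h2, ← pow_mul, ← pow_mul]
    ring
  -- peel off the `i = k` term
  have hck : ci k * ((p:ℚ_[p]) ^ ((N₀+1) * (k + 1 - k)) - (p:ℚ_[p]) ^ (k + N₀ * (k + 1 - k)))
      = (p : ℚ_[p]) ^ (N₀+1) * (1 - (p : ℚ_[p]) ^ (k - 1)) * ((bernoulli k : ℚ) : ℚ_[p]) := by
    have h3 : k + 1 - k = 1 := by omega
    have h4 : ci k = ((bernoulli k : ℚ) : ℚ_[p]) := by
      have hk1 : ((k : ℚ) + 1) ≠ 0 := by positivity
      have h4' : (bernoulli k * (((k + 1).choose k : ℕ) : ℚ) / ((k : ℚ) + 1)) = bernoulli k := by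
        rw [Nat.choose_succ_self_right]
        push_cast
        field_simp
      simp only [hci, h4']
    rw [h3, h4]
    have h5 : k + N₀ * 1 = (N₀ + 1) + (k - 1) := by omega
    rw [mul_one, h5, pow_add]
    ring
  rw [hTT, Finset.sum_range_succ, hck, add_sub_cancel_right]
  set q : ℝ := ((p : ℝ)⁻¹) ^ (2 * (N₀ + 1) - 2) with hq
  have hq0 : 0 ≤ q := by positivity
  refine le_trans (norm_sum_le _ _) (le_trans (Finset.sum_le_sum (g := fun i => ‖ci i‖ * q) ?_) ?_)
  · intro i hi
    rw [mem_range] at hi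
    rw [norm_mul]
    have h2i : 2 ≤ k + 1 - i := by omega
    have hsub : ‖(p:ℚ_[p]) ^ ((N₀+1) * (k + 1 - i)) - (p:ℚ_[p]) ^ (k + N₀ * (k + 1 - i))‖ ≤ q := by
      have e1 : (N₀ + 1) * 2 ≤ (N₀ + 1) * (k + 1 - i) := mul_le_mul_right h2i _
      have e2 : N₀ * 2 ≤ N₀ * (k + 1 - i) := mul_le_mul_right h2i _
      have hb1 : 2 * (N₀ + 1) - 2 ≤ (N₀ + 1) * (k + 1 - i) := by omega
      have hb2 : 2 * (N₀ + 1) - 2 ≤ k + N₀ * (k + 1 - i) := by omega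
      rw [sub_eq_add_neg]
      refine le_trans (Padic.nonarchimedean _ _) (max_le ?_ ?_)
      · exact norm_p_pow_le _ _ hb1
      · rw [norm_neg]; exact norm_p_pow_le _ _ hb2
    exact mul_le_mul_of_nonneg_left hsub (norm_nonneg _)
  · rw [← Finset.sum_mul]
    apply mul_le_mul_of_nonneg_right _ hq0
    apply Finset.sum_le_sum_of_subset_of_nonneg (Finset.range_subset_range.mpr (Nat.le_succ k))
    intro i _ _
    exact norm_nonneg _


lemma norm_dd_le (c : ℕ) (hc : c.Coprime p) (N : ℕ) (u : (ZMod (p ^ N))ˣ) :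
    ‖(dd c hc N u : ℚ_[p])‖ ≤ ((p : ℝ)⁻¹) ^ N :=
  norm_intCast_le_pow_of_dvd _ _ (dd_dvd c hc N u)

lemma norm_R_le (c : ℕ) (hc : c.Coprime p) (N k : ℕ) (hk : 2 ≤ k) :
    ‖∑ u : (ZMod (p ^ N))ˣ, ∑ j ∈ range (k - 1),
        (av N u : ℚ_[p]) ^ j * (dd c hc N u : ℚ_[p]) ^ (k - j) * ((k.choose j : ℕ) : ℚ_[p])‖
      ≤ ((p : ℝ)⁻¹) ^ (2 * N) := by
  have h0 : (0:ℝ) ≤ ((p : ℝ)⁻¹) ^ (2 * N) := by positivity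
  refine norm_sum_le_of_le _ _ h0 fun u _ => norm_sum_le_of_le _ _ h0 fun j hj => ?_
  rw [mem_range] at hj
  rw [norm_mul, norm_mul, norm_pow, norm_pow]
  have h1 : ‖(av N u : ℚ_[p])‖ ≤ 1 := norm_natCast_le_one _
  have h2 : ‖(dd c hc N u : ℚ_[p])‖ ^ (k - j) ≤ ((p : ℝ)⁻¹) ^ (2 * N) := by
    calc ‖(dd c hc N u : ℚ_[p])‖ ^ (k - j) ≤ (((p : ℝ)⁻¹) ^ N) ^ (k - j) := by
          gcongr
          exact norm_dd_le c hc N u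
      _ = ((p : ℝ)⁻¹) ^ (N * (k - j)) := by rw [← pow_mul]
      _ ≤ ((p : ℝ)⁻¹) ^ (2 * N) := by
          apply pow_le_pow_of_le_one (by positivity) ?_ ?_
          · rw [inv_le_one_iff₀]; right; exact_mod_cast hp.out.one_le
          · have : N * 2 ≤ N * (k - j) := mul_le_mul_right (by omega) _
            omega
  have h3 : ‖((k.choose j : ℕ) : ℚ_[p])‖ ≤ 1 := norm_natCast_le_one _
  calc ‖(av N u : ℚ_[p])‖ ^ j * ‖(dd c hc N u : ℚ_[p])‖ ^ (k - j) * ‖((k.choose j : ℕ) : ℚ_[p])‖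
      ≤ 1 ^ j * (((p : ℝ)⁻¹) ^ (2 * N)) * 1 := by
        refine mul_le_mul (mul_le_mul ?_ h2 (by positivity) (by positivity)) h3 (norm_nonneg _) (by positivity)
        exact pow_le_pow_left₀ (norm_nonneg _) h1 j
    _ = ((p : ℝ)⁻¹) ^ (2 * N) := by ring

lemma norm_one_sub_pow_le_one (c k : ℕ) : ‖(1 - (c : ℚ_[p]) ^ k)‖ ≤ 1 := by
  have : (1 - (c : ℚ_[p]) ^ k) = (((1 - (c:ℤ)^k) : ℤ) : ℚ_[p]) := by push_cast; ring
  rw [this]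
  exact Padic.norm_int_le_one _

lemma kummer_aux (c k : ℕ) (hc : c.Coprime p) (hk : 2 ≤ k) :
    ∃ D : ℝ, 0 ≤ D ∧ ∀ N, 1 ≤ N →
      ‖(1 - (c : ℚ_[p]) ^ k) * ((1 - (p : ℚ_[p]) ^ (k - 1)) * ((bernoulli k : ℚ) : ℚ_[p]) / k)
          + Phi c hc N k‖ ≤ D * ((p : ℝ)⁻¹) ^ N := by
  obtain ⟨C, hC0, hC⟩ := T_approx (p := p) k hk
  have hp0 : (0:ℝ) < p := by exact_mod_cast hp.out.pos
  have hkK : ((k : ℚ_[p])) ≠ 0 := by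
    exact_mod_cast (Nat.cast_ne_zero (R := ℚ_[p])).mpr (by omega)
  have hknorm : (0:ℝ) < ‖(k : ℚ_[p])‖ := norm_pos_iff.mpr hkK
  refine ⟨(C * (p:ℝ)^2 + 1) / ‖(k : ℚ_[p])‖, by positivity, ?_⟩
  intro N hN
  have hpNne : ((p : ℚ_[p]) ^ N) ≠ 0 := by
    apply pow_ne_zero
    exact_mod_cast (Nat.cast_ne_zero (R := ℚ_[p])).mpr hp.out.ne_zero
  set X : ℚ_[p] := (1 - (p : ℚ_[p]) ^ (k - 1)) * ((bernoulli k : ℚ) : ℚ_[p]) with hX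
  set E : ℚ_[p] := T N k - (p : ℚ_[p]) ^ N * X with hE
  set R : ℚ_[p] := ∑ u : (ZMod (p ^ N))ˣ, ∑ j ∈ range (k - 1),
      (av N u : ℚ_[p]) ^ j * (dd c hc N u : ℚ_[p]) ^ (k - j) * ((k.choose j : ℕ) : ℚ_[p]) with hR
  have hkey := key_identity c hc N k hk
  rw [← hR] at hkey
  have hG : ((1 - (c : ℚ_[p]) ^ k) * (X / k) + Phi c hc N k)
      = (-((1 - (c : ℚ_[p]) ^ k) * E + R)) / ((k : ℚ_[p]) * (p : ℚ_[p]) ^ N) := by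
    rw [eq_div_iff (mul_ne_zero hkK hpNne)]
    have h1 : ((1 - (c : ℚ_[p]) ^ k) * (X / k)) * ((k : ℚ_[p]) * (p : ℚ_[p]) ^ N)
        = (1 - (c : ℚ_[p]) ^ k) * X * (p : ℚ_[p]) ^ N := by
      field_simp
    rw [add_mul, h1]
    have hE' : E = T N k - (p : ℚ_[p]) ^ N * X := hE
    linear_combination hkey + (1 - (c : ℚ_[p]) ^ k) * hE'
  have hGoal : (1 - (c : ℚ_[p]) ^ k) * ((1 - (p : ℚ_[p]) ^ (k - 1)) * ((bernoulli k : ℚ) : ℚ_[p]) / k)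
      = (1 - (c : ℚ_[p]) ^ k) * (X / k) := by rw [hX, mul_div_assoc]
  rw [hGoal, hG, norm_div, norm_mul, norm_pow, Padic.norm_p]
  rw [div_le_iff₀ (by positivity)]
  have hnum : ‖-((1 - (c : ℚ_[p]) ^ k) * E + R)‖
      ≤ (C * (p:ℝ)^2 + 1) * (((p : ℝ)⁻¹) ^ N * ((p : ℝ)⁻¹) ^ N) := by
    rw [norm_neg]
    have hE2 : ‖E‖ ≤ C * ((p : ℝ)⁻¹) ^ (2 * N - 2) := by
      have := hC N hN
      rw [hE, hX]
      calc ‖T N k - (p : ℚ_[p]) ^ N * ((1 - (p : ℚ_[p]) ^ (k - 1)) * ((bernoulli k : ℚ) : ℚ_[p]))‖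
          = ‖T N k - (p : ℚ_[p]) ^ N * (1 - (p : ℚ_[p]) ^ (k - 1)) * ((bernoulli k : ℚ) : ℚ_[p])‖ := by
            ring_nf
        _ ≤ C * ((p : ℝ)⁻¹) ^ (2 * N - 2) := this
    have h1 : ‖(1 - (c : ℚ_[p]) ^ k) * E‖ ≤ C * ((p : ℝ)⁻¹) ^ (2 * N - 2) := by
      rw [norm_mul]
      calc ‖1 - (c : ℚ_[p]) ^ k‖ * ‖E‖ ≤ 1 * (C * ((p : ℝ)⁻¹) ^ (2 * N - 2)) := by
            refine mul_le_mul (norm_one_sub_pow_le_one c k) hE2 (norm_nonneg _) zero_le_one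
        _ = C * ((p : ℝ)⁻¹) ^ (2 * N - 2) := one_mul _
    have h2 : ‖R‖ ≤ ((p : ℝ)⁻¹) ^ (2 * N) := norm_R_le c hc N k hk
    have hrw : ((p : ℝ)⁻¹) ^ (2 * N - 2) = ((p : ℝ)⁻¹) ^ (2 * N) * (p:ℝ)^2 := by
      have h3 : 2 * N = (2 * N - 2) + 2 := by omega
      rw [h3]
      rw [pow_add]
      field_simp
      rw [Nat.add_sub_cancel]
    have hrw2 : ((p : ℝ)⁻¹) ^ N * ((p : ℝ)⁻¹) ^ N = ((p : ℝ)⁻¹) ^ (2 * N) := by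
      rw [← pow_add]; congr 1; omega
    calc ‖(1 - (c : ℚ_[p]) ^ k) * E + R‖ ≤ ‖(1 - (c : ℚ_[p]) ^ k) * E‖ + ‖R‖ := norm_add_le _ _
      _ ≤ C * ((p : ℝ)⁻¹) ^ (2 * N - 2) + ((p : ℝ)⁻¹) ^ (2 * N) := add_le_add h1 h2
      _ = (C * (p:ℝ)^2 + 1) * ((p : ℝ)⁻¹) ^ (2 * N) := by rw [hrw]; ring
      _ = (C * (p:ℝ)^2 + 1) * (((p : ℝ)⁻¹) ^ N * ((p : ℝ)⁻¹) ^ N) := by rw [hrw2]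
  refine le_trans hnum (le_of_eq ?_)
  have hpinv : ((p:ℝ))⁻¹ ^ N * (p:ℝ) ^ N = 1 := by
    rw [← mul_pow, inv_mul_cancel₀ (ne_of_gt hp0), one_pow]
  field_simp


lemma not_dvd_av (N : ℕ) (hN : 1 ≤ N) (u : (ZMod (p ^ N))ˣ) : ¬ p ∣ av N u := by
  intro hdvd
  have hcop : (av N u).Coprime (p ^ N) := ZMod.val_coe_unit_coprime u
  have : p ∣ Nat.gcd (av N u) (p ^ N) := Nat.dvd_gcd hdvd (dvd_pow_self p (by omega))
  rw [hcop] at this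
  exact absurd (Nat.dvd_one.mp this) hp.out.ne_one

lemma norm_dd_div_le_one (c : ℕ) (hc : c.Coprime p) (N : ℕ) (u : (ZMod (p ^ N))ˣ) :
    ‖(dd c hc N u : ℚ_[p]) / (p : ℚ_[p]) ^ N‖ ≤ 1 := by
  obtain ⟨e, he⟩ := dd_dvd c hc N u
  have hpNne : ((p : ℚ_[p]) ^ N) ≠ 0 := by
    apply pow_ne_zero
    exact_mod_cast (Nat.cast_ne_zero (R := ℚ_[p])).mpr hp.out.ne_zero
  have : (dd c hc N u : ℚ_[p]) / (p : ℚ_[p]) ^ N = (e : ℚ_[p]) := by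
    rw [he]; push_cast
    field_simp
  rw [this]
  exact Padic.norm_int_le_one _

lemma phi_congr (c : ℕ) (hc : c.Coprime p) (N n k k' : ℕ) (hN : 1 ≤ N) (hn : 1 ≤ n)
    (hk : 1 ≤ k) (hk' : 1 ≤ k') (h : k ≡ k' [MOD (p - 1) * p ^ (n - 1)]) :
    ‖Phi c hc N k - Phi c hc N k'‖ ≤ ((p : ℝ)⁻¹) ^ n := by
  rw [Phi, Phi, ← Finset.sum_sub_distrib]
  refine norm_sum_le_of_le _ _ (by positivity) fun u _ => ?_
  have hterm : (av N u : ℚ_[p]) ^ (k - 1) * (dd c hc N u : ℚ_[p]) / (p : ℚ_[p]) ^ N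
      - (av N u : ℚ_[p]) ^ (k' - 1) * (dd c hc N u : ℚ_[p]) / (p : ℚ_[p]) ^ N
      = (((av N u : ℤ) ^ (k - 1) - (av N u : ℤ) ^ (k' - 1) : ℤ) : ℚ_[p])
        * ((dd c hc N u : ℚ_[p]) / (p : ℚ_[p]) ^ N) := by
    push_cast
    ring
  rw [hterm, norm_mul]
  have hmod : k - 1 ≡ k' - 1 [MOD (p - 1) * p ^ (n - 1)] := by
    have h1 : (k - 1) + 1 ≡ (k' - 1) + 1 [MOD (p - 1) * p ^ (n - 1)] := by
      have e1 : (k - 1) + 1 = k := by omega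
      have e2 : (k' - 1) + 1 = k' := by omega
      rw [e1, e2]; exact h
    exact Nat.ModEq.add_right_cancel' 1 h1
  have h1 : ‖(((av N u : ℤ) ^ (k - 1) - (av N u : ℤ) ^ (k' - 1) : ℤ) : ℚ_[p])‖ ≤ ((p : ℝ)⁻¹) ^ n :=
    norm_intCast_le_pow_of_dvd _ _ (pow_sub_pow_dvd (not_dvd_av N hN u) hn hmod)
  calc ‖_‖ * ‖_‖ ≤ ((p : ℝ)⁻¹) ^ n * 1 :=
        mul_le_mul h1 (norm_dd_div_le_one c hc N u) (norm_nonneg _) (by positivity)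
    _ = _ := mul_one _

lemma norm_phi_le_one (c : ℕ) (hc : c.Coprime p) (N k : ℕ) : ‖Phi c hc N k‖ ≤ 1 := by
  rw [Phi]
  refine norm_sum_le_of_le _ _ zero_le_one fun u _ => ?_
  rw [mul_div_assoc, norm_mul, norm_pow]
  calc ‖(av N u : ℚ_[p])‖ ^ (k - 1) * ‖(dd c hc N u : ℚ_[p]) / (p : ℚ_[p]) ^ N‖
      ≤ 1 ^ (k - 1) * 1 := mul_le_mul (pow_le_pow_left₀ (norm_nonneg _) (norm_natCast_le_one _) _)
        (norm_dd_div_le_one c hc N u) (norm_nonneg _) (by positivity)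
    _ = 1 := by ring

lemma euler_congr (c n k k' : ℕ) (hc : c.Coprime p) (hn : 1 ≤ n)
    (h : k ≡ k' [MOD (p - 1) * p ^ (n - 1)]) :
    ‖(c : ℚ_[p]) ^ k - (c : ℚ_[p]) ^ k'‖ ≤ ((p : ℝ)⁻¹) ^ n := by
  have hnd : ¬ p ∣ c := by
    intro hd
    have hg : p ∣ Nat.gcd c p := Nat.dvd_gcd hd dvd_rfl
    rw [Nat.Coprime] at hc
    rw [hc] at hg
    exact absurd (Nat.dvd_one.mp hg) hp.out.ne_one
  have := pow_sub_pow_dvd (p := p) hnd hn h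
  have hcast : (c : ℚ_[p]) ^ k - (c : ℚ_[p]) ^ k'
      = (((c : ℤ) ^ k - (c : ℤ) ^ k' : ℤ) : ℚ_[p]) := by push_cast; ring
  rw [hcast]
  exact norm_intCast_le_pow_of_dvd _ _ this

lemma norm_one_sub_pow_eq_one (c k : ℕ) (h : ¬ ((p:ℤ) ∣ ((c:ℤ) ^ k - 1))) :
    ‖(1 - (c : ℚ_[p]) ^ k)‖ = 1 := by
  refine le_antisymm (norm_one_sub_pow_le_one c k) ?_
  have hcast : (1 - (c : ℚ_[p]) ^ k) = -((((c:ℤ) ^ k - 1 : ℤ)) : ℚ_[p]) := by push_cast; ring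
  rw [hcast, norm_neg]
  by_contra hlt
  exact h (Padic.norm_intCast_lt_one_iff.mp (lt_of_not_ge hlt))

lemma exists_good_c (k k' : ℕ) (hk : ¬ ((p - 1) ∣ k)) (hk' : ¬ ((p - 1) ∣ k')) :
    ∃ c : ℕ, c.Coprime p ∧ ¬ ((p:ℤ) ∣ ((c:ℤ) ^ k - 1)) ∧ ¬ ((p:ℤ) ∣ ((c:ℤ) ^ k' - 1)) := by
  obtain ⟨g, hg⟩ := IsCyclic.exists_generator (α := (ZMod p)ˣ)
  haveI : NeZero p := ⟨hp.out.ne_zero⟩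
  refine ⟨((g : ZMod p)).val, ZMod.val_coe_unit_coprime g, ?_, ?_⟩
  all_goals {
    intro hdvd
    have h0 : (((((g : ZMod p)).val : ℤ) ^ _ - 1 : ℤ) : ZMod p) = 0 :=
      (ZMod.intCast_zmod_eq_zero_iff_dvd _ p).mpr hdvd
    push_cast at h0
    rw [ZMod.natCast_val, ZMod.cast_id, sub_eq_zero] at h0
    have hu : g ^ _ = 1 := Units.ext (by rw [Units.val_pow_eq_pow_val, h0, Units.val_one])
    have hord := orderOf_dvd_of_pow_eq_one hu
    rw [orderOf_eq_card_of_forall_mem_zpowers hg, Nat.card_eq_fintype_card,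
      ZMod.card_units p] at hord
    first
    | exact hk hord
    | exact hk' hord }

/-- Kummer's congruence, in `ℚ_[p]`. -/
theorem kummer_qp (k k' n : ℕ) (hn : 1 ≤ n) (hk : 2 ≤ k) (hk' : 2 ≤ k')
    (hnd : ¬ ((p - 1) ∣ k)) (hnd' : ¬ ((p - 1) ∣ k'))
    (hcong : k ≡ k' [MOD (p - 1) * p ^ (n - 1)]) :
    ‖(((1 - (p:ℚ) ^ (k - 1)) * (bernoulli k / (k:ℚ)) : ℚ) : ℚ_[p])
        - (((1 - (p:ℚ) ^ (k' - 1)) * (bernoulli k' / (k':ℚ)) : ℚ) : ℚ_[p])‖ ≤ ((p : ℝ)⁻¹) ^ n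
      ∧ ‖(((1 - (p:ℚ) ^ (k - 1)) * (bernoulli k / (k:ℚ)) : ℚ) : ℚ_[p])‖ ≤ 1
      ∧ ‖(((1 - (p:ℚ) ^ (k' - 1)) * (bernoulli k' / (k':ℚ)) : ℚ) : ℚ_[p])‖ ≤ 1 := by
  obtain ⟨c, hc, hc1, hc2⟩ := exists_good_c k k' hnd hnd'
  obtain ⟨D, hD0, hD⟩ := kummer_aux c k hc hk
  obtain ⟨D', hD'0, hD'⟩ := kummer_aux c k' hc hk'
  have hp1 : (1:ℝ) < p := by exact_mod_cast hp.out.one_lt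
  have hp0 : (0:ℝ) < p := lt_trans one_pos hp1
  -- choose N large
  obtain ⟨N₁, hN₁⟩ := pow_unbounded_of_one_lt (max D D' * (p:ℝ)^n) hp1
  set N := N₁ + n + 1 with hNdef
  have hN1 : 1 ≤ N := by omega
  have hbound : ∀ {d : ℝ}, 0 ≤ d → d ≤ max D D' → d * ((p : ℝ)⁻¹) ^ N ≤ ((p : ℝ)⁻¹) ^ n := by
    intro d hd0 hdle
    have hsplit : ((p : ℝ)⁻¹) ^ N = ((p : ℝ)⁻¹) ^ n * ((p : ℝ)⁻¹) ^ (N₁ + 1) := by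
      rw [← pow_add]; congr 1; omega
    rw [hsplit, ← mul_assoc, mul_comm d, mul_assoc]
    have h2 : d * ((p : ℝ)⁻¹) ^ (N₁ + 1) ≤ 1 := by
      have hd2 : d ≤ (p:ℝ) ^ (N₁ + 1) := by
        calc d ≤ max D D' := hdle
          _ ≤ max D D' * (p:ℝ)^n :=
              le_mul_of_one_le_right (le_trans hD0 (le_max_left _ _)) (one_le_pow₀ (le_of_lt hp1))
          _ ≤ (p:ℝ) ^ N₁ := le_of_lt hN₁
          _ ≤ (p:ℝ) ^ (N₁ + 1) := pow_le_pow_right₀ (le_of_lt hp1) (by omega)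
      calc d * ((p : ℝ)⁻¹) ^ (N₁ + 1) ≤ (p:ℝ) ^ (N₁ + 1) * ((p : ℝ)⁻¹) ^ (N₁ + 1) :=
            mul_le_mul_of_nonneg_right hd2 (by positivity)
        _ = 1 := by rw [← mul_pow, mul_inv_cancel₀ (ne_of_gt hp0), one_pow]
    calc ((p : ℝ)⁻¹) ^ n * (d * ((p : ℝ)⁻¹) ^ (N₁ + 1)) ≤ ((p : ℝ)⁻¹) ^ n * 1 :=
          mul_le_mul_of_nonneg_left h2 (by positivity)
      _ = _ := mul_one _
  have hA := hD N hN1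
  have hB := hD' N hN1
  have hA' := le_trans hA (hbound hD0 (le_max_left _ _))
  have hB' := le_trans hB (hbound hD'0 (le_max_right _ _))
  -- rewrite the rational casts
  have hcastk : (((1 - (p:ℚ) ^ (k - 1)) * (bernoulli k / (k:ℚ)) : ℚ) : ℚ_[p])
      = (1 - (p : ℚ_[p]) ^ (k - 1)) * ((bernoulli k : ℚ) : ℚ_[p]) / k := by
    push_cast
    ring
  have hcastk' : (((1 - (p:ℚ) ^ (k' - 1)) * (bernoulli k' / (k':ℚ)) : ℚ) : ℚ_[p])
      = (1 - (p : ℚ_[p]) ^ (k' - 1)) * ((bernoulli k' : ℚ) : ℚ_[p]) / k' := by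
    push_cast
    ring
  set θ : ℚ_[p] := (1 - (p : ℚ_[p]) ^ (k - 1)) * ((bernoulli k : ℚ) : ℚ_[p]) / k with hθ
  set θ' : ℚ_[p] := (1 - (p : ℚ_[p]) ^ (k' - 1)) * ((bernoulli k' : ℚ) : ℚ_[p]) / k' with hθ'
  set U : ℚ_[p] := 1 - (c : ℚ_[p]) ^ k with hU
  set U' : ℚ_[p] := 1 - (c : ℚ_[p]) ^ k' with hU'
  have hUn : ‖U‖ = 1 := norm_one_sub_pow_eq_one c k hc1
  have hU'n : ‖U'‖ = 1 := norm_one_sub_pow_eq_one c k' hc2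
  have hUU' : ‖U - U'‖ ≤ ((p : ℝ)⁻¹) ^ n := by
    have : U - U' = -((c : ℚ_[p]) ^ k - (c : ℚ_[p]) ^ k') := by rw [hU, hU']; ring
    rw [this, norm_neg]
    exact euler_congr c n k k' hc hn hcong
  have hPhiC := phi_congr c hc N n k k' hN1 hn (by omega) (by omega) hcong
  have hmax : ∀ x y z : ℚ_[p], ∀ b : ℝ, ‖x‖ ≤ b → ‖y‖ ≤ b → ‖z‖ ≤ b → ‖x + y + z‖ ≤ b := by
    intro x y z b hx hy hz
    refine le_trans (Padic.nonarchimedean _ _) (max_le ?_ hz)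
    exact le_trans (Padic.nonarchimedean _ _) (max_le hx hy)
  have hUθ : ‖U * θ - U' * θ'‖ ≤ ((p : ℝ)⁻¹) ^ n := by
    have hsplit : U * θ - U' * θ'
        = (U * θ + Phi c hc N k) + -(Phi c hc N k - Phi c hc N k')
          + -(U' * θ' + Phi c hc N k') := by ring
    rw [hsplit]
    refine hmax _ _ _ _ hA' ?_ ?_
    · rw [norm_neg]; exact hPhiC
    · rw [norm_neg]; exact hB'
  have hpn1 : ((p : ℝ)⁻¹) ^ n ≤ 1 := by
    apply pow_le_one₀ (by positivity)
    rw [inv_le_one_iff₀]; right; exact le_of_lt hp1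
  have hθle : ‖θ‖ ≤ 1 := by
    have h1 : ‖U * θ‖ ≤ 1 := by
      have : U * θ = (U * θ + Phi c hc N k) + -(Phi c hc N k) := by ring
      rw [this]
      refine le_trans (Padic.nonarchimedean _ _) (max_le (le_trans hA' hpn1) ?_)
      rw [norm_neg]; exact norm_phi_le_one c hc N k
    rwa [norm_mul, hUn, one_mul] at h1
  have hθ'le : ‖θ'‖ ≤ 1 := by
    have h1 : ‖U' * θ'‖ ≤ 1 := by
      have : U' * θ' = (U' * θ' + Phi c hc N k') + -(Phi c hc N k') := by ring
      rw [this]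
      refine le_trans (Padic.nonarchimedean _ _) (max_le (le_trans hB' hpn1) ?_)
      rw [norm_neg]; exact norm_phi_le_one c hc N k'
    rwa [norm_mul, hU'n, one_mul] at h1
  have hfinal : ‖θ - θ'‖ ≤ ((p : ℝ)⁻¹) ^ n := by
    have h1 : U * (θ - θ') = (U * θ - U' * θ') + -((U - U') * θ') := by ring
    have h2 : ‖U * (θ - θ')‖ ≤ ((p : ℝ)⁻¹) ^ n := by
      rw [h1]
      refine le_trans (Padic.nonarchimedean _ _) (max_le hUθ ?_)
      rw [norm_neg, norm_mul]
      calc ‖U - U'‖ * ‖θ'‖ ≤ ((p : ℝ)⁻¹) ^ n * 1 :=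
            mul_le_mul hUU' hθ'le (norm_nonneg _) (by positivity)
        _ = _ := mul_one _
    rwa [norm_mul, hUn, one_mul] at h2
  rw [hcastk, hcastk']
  exact ⟨hfinal, hθle, hθ'le⟩


lemma bernoulli_even_ne_zero {k : ℕ} (hk : k ≠ 0) (he : k % 2 = 0) : bernoulli k ≠ 0 := by
  obtain ⟨m, rfl⟩ : ∃ m, k = 2 * m := ⟨k / 2, by omega⟩
  have hm : m ≠ 0 := by omega
  intro h0
  have hs := hasSum_zeta_nat (k := m) hm
  rw [h0] at hs
  push_cast at hs
  simp only [mul_zero, zero_div] at hs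
  have h1 := le_hasSum hs 1 (fun i _ => by positivity)
  norm_num at h1

end Stmt12

set_option maxHeartbeats 1000000 in
/-- ℓ-part of the Kummer congruences (Theorem 2): for an odd prime
`ℓ`, `(ℓ-1) ∤ k`, `(ℓ-1) ∤ k'` and `k ≡ k' (mod (ℓ-1)ℓ^{n-1})`, the `ℓ`-parts
`ℓ^{v_ℓ(·)}` of `(1-ℓ^{k-1})B_k/k` and `(1-ℓ^{k'-1})B_{k'}/k'` are congruent
modulo `ℓ^n`. -/
theorem stmt12 (ℓ : ℕ) (hℓ : ℓ.Prime) (hodd : Odd ℓ) (n : ℕ) (hn : 1 ≤ n)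
    (k k' : ℕ) (hk : 0 < k) (hk' : 0 < k')
    (hndvd : ¬ ((ℓ - 1) ∣ k)) (hndvd' : ¬ ((ℓ - 1) ∣ k'))
    (hcong : k ≡ k' [MOD (ℓ - 1) * ℓ ^ (n - 1)]) :
    (ℓ : ℤ) ^ ((padicValRat ℓ ((1 - (ℓ : ℚ) ^ (k - 1)) * (bernoulli k / (k : ℚ)))).toNat) ≡
      (ℓ : ℤ) ^ ((padicValRat ℓ ((1 - (ℓ : ℚ) ^ (k' - 1)) * (bernoulli k' / (k' : ℚ)))).toNat)
        [ZMOD (ℓ : ℤ) ^ n] := by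
  haveI : Fact ℓ.Prime := ⟨hℓ⟩
  have hl3 : 3 ≤ ℓ := by
    rcases hodd with ⟨t, ht⟩
    have := hℓ.two_le
    omega
  have h2dvd : (2 : ℕ) ∣ (ℓ - 1) * ℓ ^ (n - 1) := Dvd.dvd.mul_right ⟨(ℓ - 1) / 2, by
    rcases hodd with ⟨t, ht⟩; omega⟩ _
  have hpar := Nat.ModEq.of_dvd h2dvd hcong
  by_cases hke : k % 2 = 1
  · -- odd case: both values vanish
    have hke' : k' % 2 = 1 := by
      have := hpar
      unfold Nat.ModEq at this
      omega
    have hz : ∀ j : ℕ, 0 < j → j % 2 = 1 → (1 - (ℓ:ℚ) ^ (j - 1)) * (bernoulli j / (j:ℚ)) = 0 := by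
      intro j hj hjo
      rcases eq_or_ne j 1 with rfl | hj1
      · norm_num
      · have hb : bernoulli j = 0 := by
          rw [bernoulli_eq_bernoulli'_of_ne_one hj1]
          exact bernoulli'_eq_zero_of_odd (Nat.odd_iff.mpr hjo) (by omega)
        rw [hb]
        ring
    rw [hz k hk hke, hz k' hk' hke', padicValRat.zero]
  · -- even case
    have hke2 : k % 2 = 0 := by omega
    have hke2' : k' % 2 = 0 := by
      have := hpar
      unfold Nat.ModEq at this
      omega
    have hk2 : 2 ≤ k := by omega
    have hk2' : 2 ≤ k' := by omega
    obtain ⟨hdiff, hX1, hY1⟩ :=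
      Stmt12.kummer_qp (p := ℓ) k k' n hn hk2 hk2' hndvd hndvd' hcong
    set x : ℚ := (1 - (ℓ : ℚ) ^ (k - 1)) * (bernoulli k / (k : ℚ)) with hxdef
    set y : ℚ := (1 - (ℓ : ℚ) ^ (k' - 1)) * (bernoulli k' / (k' : ℚ)) with hydef
    have hl1 : (1:ℚ) < (ℓ:ℚ) := by exact_mod_cast by omega
    have hxy0 : ∀ j : ℕ, 2 ≤ j → j % 2 = 0 →
        (1 - (ℓ : ℚ) ^ (j - 1)) * (bernoulli j / (j : ℚ)) ≠ 0 := by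
      intro j hj hje
      apply mul_ne_zero
      · have h1 : (1:ℚ) < (ℓ:ℚ) ^ (j - 1) := one_lt_pow₀ hl1 (by omega)
        intro hz0
        rw [sub_eq_zero] at hz0
        exact absurd hz0.symm (ne_of_gt h1)
      · exact div_ne_zero (Stmt12.bernoulli_even_ne_zero (by omega) hje)
          (by exact_mod_cast (by omega : j ≠ 0))
    have hx0 : x ≠ 0 := hxy0 k hk2 hke2
    have hy0 : y ≠ 0 := hxy0 k' hk2' hke2'
    set v := padicValRat ℓ x with hv
    set w := padicValRat ℓ y with hw
    have hp1 : (1:ℝ) < (ℓ:ℝ) := by exact_mod_cast by omega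
    have hnormx : ‖(x : ℚ_[ℓ])‖ = (ℓ:ℝ) ^ (-v) := by
      rw [Padic.eq_padicNorm, padicNorm.eq_zpow_of_nonzero hx0]
      push_cast
      rfl
    have hnormy : ‖(y : ℚ_[ℓ])‖ = (ℓ:ℝ) ^ (-w) := by
      rw [Padic.eq_padicNorm, padicNorm.eq_zpow_of_nonzero hy0]
      push_cast
      rfl
    have hpn : ((ℓ:ℝ)⁻¹) ^ n = (ℓ:ℝ) ^ (-(n:ℤ)) := by
      rw [inv_pow, ← zpow_natCast, ← zpow_neg]
    have hv0 : 0 ≤ v := by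
      by_contra hneg
      push_neg at hneg
      have h1 : (ℓ:ℝ) ^ (0:ℤ) < (ℓ:ℝ) ^ (-v) := zpow_lt_zpow_right₀ hp1 (by omega)
      rw [zpow_zero] at h1
      rw [hnormx] at hX1
      linarith
    have hw0 : 0 ≤ w := by
      by_contra hneg
      push_neg at hneg
      have h1 : (ℓ:ℝ) ^ (0:ℤ) < (ℓ:ℝ) ^ (-w) := zpow_lt_zpow_right₀ hp1 (by omega)
      rw [zpow_zero] at h1
      rw [hnormy] at hY1
      linarith
    have hdiff' : ‖(x : ℚ_[ℓ]) - (y : ℚ_[ℓ])‖ ≤ (ℓ:ℝ) ^ (-(n:ℤ)) := le_trans hdiff (le_of_eq hpn)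
    -- key dichotomy
    by_cases hvn : (n:ℤ) ≤ v
    · have hwn : (n:ℤ) ≤ w := by
        by_contra hwn
        push_neg at hwn
        have h1 : (ℓ:ℝ) ^ (-(n:ℤ)) < (ℓ:ℝ) ^ (-w) := zpow_lt_zpow_right₀ hp1 (by omega)
        have h2 : ‖(y : ℚ_[ℓ])‖ ≤ (ℓ:ℝ) ^ (-(n:ℤ)) := by
          have heq : (y : ℚ_[ℓ]) = (x : ℚ_[ℓ]) + -((x : ℚ_[ℓ]) - (y : ℚ_[ℓ])) := by ring
          rw [heq]
          refine le_trans (Padic.nonarchimedean _ _) (max_le ?_ ?_)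
          · rw [hnormx]
            exact zpow_le_zpow_right₀ hp1.le (by omega)
          · rw [norm_neg]; exact hdiff'
        rw [hnormy] at h2
        exact absurd h2 (not_le.mpr h1)
      have d1 : ((ℓ:ℤ) ^ n) ∣ (ℓ:ℤ) ^ (v.toNat) := pow_dvd_pow _ (by omega)
      have d2 : ((ℓ:ℤ) ^ n) ∣ (ℓ:ℤ) ^ (w.toNat) := pow_dvd_pow _ (by omega)
      exact (Int.modEq_zero_iff_dvd.mpr d1).trans ((Int.modEq_zero_iff_dvd.mpr d2).symm)
    · push_neg at hvn
      have hwn : w < (n:ℤ) := by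
        by_contra hwn
        push_neg at hwn
        have h1 : (ℓ:ℝ) ^ (-(n:ℤ)) < (ℓ:ℝ) ^ (-v) := zpow_lt_zpow_right₀ hp1 (by omega)
        have h2 : ‖(x : ℚ_[ℓ])‖ ≤ (ℓ:ℝ) ^ (-(n:ℤ)) := by
          have heq : (x : ℚ_[ℓ]) = (y : ℚ_[ℓ]) + ((x : ℚ_[ℓ]) - (y : ℚ_[ℓ])) := by ring
          rw [heq]
          refine le_trans (Padic.nonarchimedean _ _) (max_le ?_ ?_)
          · rw [hnormy]
            exact zpow_le_zpow_right₀ hp1.le (by omega)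
          · exact hdiff'
        rw [hnormx] at h2
        exact absurd h2 (not_le.mpr h1)
      have hnorm_eq : ‖(x : ℚ_[ℓ])‖ = ‖(y : ℚ_[ℓ])‖ := by
        by_contra hne
        have h3 : ‖(x : ℚ_[ℓ]) + -(y : ℚ_[ℓ])‖ = max ‖(x : ℚ_[ℓ])‖ ‖-(y : ℚ_[ℓ])‖ :=
          Padic.add_eq_max_of_ne (by rwa [norm_neg])
        rw [← sub_eq_add_neg, norm_neg] at h3
        have h4 : ‖(x : ℚ_[ℓ])‖ ≤ ‖(x : ℚ_[ℓ]) - (y : ℚ_[ℓ])‖ := by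
          rw [h3]; exact le_max_left _ _
        have h5 : (ℓ:ℝ) ^ (-(n:ℤ)) < (ℓ:ℝ) ^ (-v) := zpow_lt_zpow_right₀ hp1 (by omega)
        rw [hnormx] at h4
        linarith [le_trans h4 hdiff']
      have hvw : v = w := by
        rw [hnormx, hnormy] at hnorm_eq
        rcases lt_trichotomy v w with h | h | h
        · exact absurd hnorm_eq.symm (ne_of_lt (zpow_lt_zpow_right₀ hp1 (by omega)))
        · exact h
        · exact absurd hnorm_eq (ne_of_lt (zpow_lt_zpow_right₀ hp1 (by omega)))
      rw [hvw]
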